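/- Write D_L = I + 2^m U with U = (x y; u v). Then for every k ≥ 0 one has t_{k+L} = 2^m u s_k + t_k + 2^m v t_k; consequently, if u = 2^e u' with u' odd and t_k = 2^{m+f} t' with t' odd and 1−m ≤ f, then t_{k+L} = 2^{m+f} (t' + 2^{e−f} u' s_k + 2^m v t') whenever f ≤ e. -/

import Mathlib

/-- With `D_L = I + 2^m U`, `U = (x y; u v)`: `t (k+L) = 2^m u s k + t k + 2^m v t k`
for every `k ≥ 0`; consequently, if `u = 2^e u'` with `u'` odd and `t k = 2^g t'` with
`t'` odd, `1 ≤ g ≤ m + e` (i.e. `g = m + f` with `1 - m ≤ f ≤ e`), then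
`t (k+L) = 2^g (t' + 2^(m+e-g) u' s k + 2^m v t')`. -/
theorem t_shift_formula
    (a s t : ℤ → ℤ) (l : ℕ) (hl : 1 ≤ l)
    (ha_pos : ∀ k : ℤ, 0 ≤ k → 0 < a k)
    (ha_per : ∀ k : ℤ, 0 ≤ k → a (k + l) = a k)
    (hs_neg : s (-1) = 1) (ht_neg : t (-1) = 0)
    (hs_zero : s 0 = a 0) (ht_zero : t 0 = 1)
    (hs_rec : ∀ k : ℤ, 1 ≤ k → s k = a k * s (k - 1) + s (k - 2))
    (ht_rec : ∀ k : ℤ, 1 ≤ k → t k = a k * t (k - 1) + t (k - 2))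
    (L : ℕ) (hL_pos : 0 < L) (hL_even : Even L) (hL_mul : l ∣ L)
    (m : ℕ) (hm : 2 ≤ m) (x y u v : ℤ)
    (hDU : s ((L : ℤ) - 1) = 1 + 2 ^ m * x ∧ s ((L : ℤ) - 2) = 2 ^ m * y ∧
           t ((L : ℤ) - 1) = 2 ^ m * u ∧ t ((L : ℤ) - 2) = 1 + 2 ^ m * v) :
    (∀ k : ℤ, 0 ≤ k → t (k + L) = 2 ^ m * u * s k + t k + 2 ^ m * v * t k) ∧
    (∀ k : ℤ, 0 ≤ k → ∀ (e g : ℕ) (u' t' : ℤ), u = 2 ^ e * u' → Odd u' → Odd t' →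
      t k = 2 ^ g * t' → 1 ≤ g → g ≤ m + e →
      t (k + L) = 2 ^ g * (t' + 2 ^ (m + e - g) * u' * s k + 2 ^ m * v * t')) := by
  obtain ⟨hs1, hs2, ht1, ht2⟩ := hDU
  -- periodicity with period n*l
  have ha_per' : ∀ n : ℕ, ∀ k : ℤ, 0 ≤ k → a (k + n * l) = a k := by
    intro n
    induction n with
    | zero => intro k hk; simp
    | succ n ih =>
      intro k hk
      have h1 : (k : ℤ) + (n + 1 : ℕ) * l = (k + n * l) + l := by push_cast; ring
      rw [h1, ha_per _ (by positivity), ih k hk]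
  have haL : ∀ k : ℤ, 0 ≤ k → a (k + L) = a k := by
    intro k hk
    obtain ⟨c, hc⟩ := hL_mul
    have : (L : ℤ) = (c : ℕ) * l := by rw [hc]; push_cast; ring
    rw [this, ha_per' c k hk]
  have hL1 : (1 : ℤ) ≤ L := by exact_mod_cast hL_pos
  -- main formula by induction
  have key : ∀ k : ℤ, 0 ≤ k →
      (t (k + L) = t ((L:ℤ) - 1) * s k + t ((L:ℤ) - 2) * t k) ∧
      (t (k - 1 + L) = t ((L:ℤ) - 1) * s (k - 1) + t ((L:ℤ) - 2) * t (k - 1)) := by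
    intro k hk
    refine Int.le_induction (m := 0)
      (motive := fun j _ => (t (j + L) = t ((L:ℤ) - 1) * s j + t ((L:ℤ) - 2) * t j) ∧
        (t (j - 1 + L) = t ((L:ℤ) - 1) * s (j - 1) + t ((L:ℤ) - 2) * t (j - 1)))
      ?_ ?_ k hk
    · -- base
      constructor
      · have h0 : (0 : ℤ) + L = L := by ring
        have haL0 : a ((L:ℤ)) = a 0 := by simpa using haL 0 le_rfl
        rw [h0, ht_rec L hL1, haL0, hs_zero, ht_zero]
        ring
      · have h1 : (0 : ℤ) - 1 + L = (L:ℤ) - 1 := by ring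
        rw [h1]
        have h2 : (0 : ℤ) - 1 = -1 := by ring
        rw [h2, hs_neg, ht_neg]; ring
    · intro k hk ih
      refine ⟨?_, by simpa using (ih).1⟩
      have hk1 : (1:ℤ) ≤ k + 1 := by linarith
      have hkL : (1:ℤ) ≤ k + 1 + L := by linarith
      have hrec := ht_rec (k + 1 + L) hkL
      have hper : a (k + 1 + L) = a (k + 1) := haL (k + 1) (by linarith)
      have e1 : k + 1 + L - 1 = k + L := by ring
      have e2 : k + 1 + L - 2 = k - 1 + L := by ring
      rw [hper, e1, e2] at hrec
      have e3 : k + 1 - 1 = k := by ring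
      have e4 : k + 1 - 2 = k - 1 := by ring
      rw [hrec, ih.1, ih.2, ht_rec (k+1) hk1, hs_rec (k+1) hk1, e3, e4]
      ring
  have main : ∀ k : ℤ, 0 ≤ k → t (k + L) = 2 ^ m * u * s k + t k + 2 ^ m * v * t k := by
    intro k hk
    rw [(key k hk).1, ht1, ht2]; ring
  refine ⟨main, ?_⟩
  intro k hk e g u' t' hu hu' ht' htk hg1 hgme
  rw [main k hk, hu, htk]
  have hpow : (2:ℤ) ^ g * 2 ^ (m + e - g) = 2 ^ m * 2 ^ e := by
    rw [← pow_add, ← pow_add, Nat.add_sub_cancel' hgme]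
  linear_combination (-(s k * u')) * hpow
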